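/- Let A be a real n×n matrix, let ‖·‖ be the operator norm on real n×n matrices induced by the ℓ∞ vector norm, let t > 0, and let κ be a natural number such that ε := (‖A‖ t)/(κ+2) < 1. Then ‖ ∫_0^t exp(sA) ds − ∑_{i=0}^{κ} (t^{i+1}/(i+1)!) Aⁱ ‖ ≤ t · ((‖A‖ t)^{κ+1} / (κ+1)!) · 1/(1−ε). -/

import Mathlib

open Matrix

attribute [local instance] Matrix.linftyOpNormedRing Matrix.linftyOpNormedAlgebra

lemma exp_taylor_tail_bound (n κ : ℕ) (B : Matrix (Fin n) (Fin n) ℝ) (r : ℝ)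
    (hB : ‖B‖ ≤ r) (hε : r / (κ + 2) < 1) :
    ‖NormedSpace.exp B - ∑ i ∈ Finset.range (κ + 1), ((i.factorial : ℝ)⁻¹) • B ^ i‖ ≤
      r ^ (κ + 1) / (Nat.factorial (κ + 1)) * (1 / (1 - r / (κ + 2))) := by
  have hr : 0 ≤ r := le_trans (norm_nonneg B) hB
  have hεnn : 0 ≤ r / (κ + 2) := by positivity
  set f : ℕ → Matrix (Fin n) (Fin n) ℝ := fun i => ((i.factorial : ℝ)⁻¹) • B ^ i with hf
  have hsum : Summable f := NormedSpace.expSeries_summable' (𝕂 := ℝ) B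
  have hkey := Summable.sum_add_tsum_nat_add (κ + 1) hsum
  rw [NormedSpace.exp_eq_tsum ℝ]
  have hdiff : (∑' i, f i) - ∑ i ∈ Finset.range (κ + 1), f i = ∑' i, f (i + (κ + 1)) := by
    rw [← hkey]; abel
  rw [hdiff]
  set D : ℝ := r ^ (κ + 1) / (Nat.factorial (κ + 1)) with hD
  have hDnn : 0 ≤ D := by positivity
  have hterm : ∀ i : ℕ, ‖f (i + (κ + 1))‖ ≤ D * (r / (κ + 2)) ^ i := by
    intro i
    have h1 : ‖f (i + (κ + 1))‖ ≤ r ^ (i + (κ + 1)) / (Nat.factorial (i + (κ + 1))) := by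
      rw [hf]
      simp only [norm_smul, norm_inv, Real.norm_natCast]
      rw [div_eq_mul_inv, mul_comm]
      gcongr
      calc ‖B ^ (i + (κ + 1))‖ ≤ ‖B‖ ^ (i + (κ + 1)) := norm_pow_le' _ (Nat.succ_le_of_lt (Nat.lt_of_lt_of_le (Nat.zero_lt_succ κ) (Nat.le_add_left _ _)))
        _ ≤ r ^ (i + (κ + 1)) := by gcongr
    refine h1.trans ?_
    have hfac : ((κ + 1).factorial : ℝ) * ((κ : ℝ) + 2) ^ i ≤ ((i + (κ + 1)).factorial : ℝ) := by
      have h2 : (κ + 1).factorial * (κ + 1 + 1) ^ i ≤ (κ + 1 + i).factorial :=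
        Nat.factorial_mul_pow_le_factorial
      calc ((κ + 1).factorial : ℝ) * ((κ : ℝ) + 2) ^ i
          = (((κ + 1).factorial * (κ + 1 + 1) ^ i : ℕ) : ℝ) := by push_cast; ring
        _ ≤ (((κ + 1 + i).factorial : ℕ) : ℝ) := by exact_mod_cast h2
        _ = ((i + (κ + 1)).factorial : ℝ) := by rw [Nat.add_comm]
    calc r ^ (i + (κ + 1)) / (Nat.factorial (i + (κ + 1)))
        ≤ r ^ (i + (κ + 1)) / (((κ + 1).factorial : ℝ) * ((κ : ℝ) + 2) ^ i) := by
          gcongr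
        _ = D * (r / (κ + 2)) ^ i := by
          rw [hD, pow_add, div_pow, mul_comm (r ^ i)]
          field_simp
  have hgsum : Summable (fun i : ℕ => D * (r / (κ + 2)) ^ i) :=
    (summable_geometric_of_lt_one hεnn hε).mul_left D
  have hnsum : Summable (fun i : ℕ => ‖f (i + (κ + 1))‖) :=
    Summable.of_nonneg_of_le (fun i => norm_nonneg _) hterm hgsum
  calc ‖∑' i, f (i + (κ + 1))‖ ≤ ∑' i, ‖f (i + (κ + 1))‖ := norm_tsum_le_tsum_norm hnsum
    _ ≤ ∑' i, D * (r / (κ + 2)) ^ i := Summable.tsum_le_tsum hterm hnsum hgsum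
    _ = D * (1 - r / (κ + 2))⁻¹ := by
        rw [tsum_mul_left, tsum_geometric_of_lt_one hεnn hε]
    _ = D * (1 / (1 - r / (κ + 2))) := by rw [one_div]

/-- Truncation error of the Taylor series of the integrated matrix exponential:
if `ε = ‖A‖t/(κ+2) < 1`, then
`‖∫₀ᵗ exp(sA) ds − ∑_{i=0}^{κ} (t^{i+1}/(i+1)!) Aⁱ‖ ≤ t·((‖A‖t)^{κ+1}/(κ+1)!)·1/(1−ε)`. -/
theorem integral_matrix_exp_taylor_truncation_bound (n : ℕ)
    (A : Matrix (Fin n) (Fin n) ℝ) (t : ℝ) (ht : 0 < t) (κ : ℕ)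
    (hε : ‖A‖ * t / (κ + 2) < 1) :
    ‖(∫ s in (0 : ℝ)..t, NormedSpace.exp (s • A)) -
        ∑ i ∈ Finset.range (κ + 1), (t ^ (i + 1) / (Nat.factorial (i + 1))) • A ^ i‖ ≤
      t * ((‖A‖ * t) ^ (κ + 1) / (Nat.factorial (κ + 1)) *
        (1 / (1 - ‖A‖ * t / (κ + 2)))) := by
  have hcontA : Continuous fun s : ℝ => s • A := continuous_id.smul continuous_const
  have hexp_cont : Continuous fun s : ℝ => NormedSpace.exp (s • A) :=
    NormedSpace.exp_continuous.comp hcontA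
  have hpart_cont : Continuous fun s : ℝ =>
      ∑ i ∈ Finset.range (κ + 1), ((i.factorial : ℝ)⁻¹) • (s • A) ^ i := by
    exact continuous_finset_sum _ fun i _ => (Continuous.const_smul (hcontA.pow i) ((i.factorial : ℝ)⁻¹) : Continuous fun s : ℝ => ((i.factorial : ℝ)⁻¹) • (s • A) ^ i)
  -- rewrite the finite sum as an integral
  have hsum_eq : ∑ i ∈ Finset.range (κ + 1), (t ^ (i + 1) / (Nat.factorial (i + 1))) • A ^ i
      = ∫ s in (0:ℝ)..t, ∑ i ∈ Finset.range (κ + 1), ((i.factorial : ℝ)⁻¹) • (s • A) ^ i := by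
    rw [intervalIntegral.integral_finset_sum (fun i _ =>
      (Continuous.intervalIntegrable (show Continuous fun s : ℝ => ((i.factorial : ℝ)⁻¹) • (s • A) ^ i from Continuous.const_smul (hcontA.pow i) ((i.factorial : ℝ)⁻¹)) _ _))]
    refine Finset.sum_congr rfl fun i _ => ?_
    have : ∀ s : ℝ, ((i.factorial : ℝ)⁻¹) • (s • A) ^ i = (((i.factorial : ℝ)⁻¹) * s ^ i) • A ^ i := by
      intro s; rw [smul_pow, smul_smul]
    simp_rw [this]
    rw [intervalIntegral.integral_smul_const, intervalIntegral.integral_const_mul,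
      integral_pow]
    congr 1
    have h0 : (0:ℝ) ^ (i+1) = 0 := zero_pow (Nat.succ_ne_zero i)
    rw [h0, sub_zero, Nat.factorial_succ]
    push_cast
    field_simp
  rw [hsum_eq, ← intervalIntegral.integral_sub (hexp_cont.intervalIntegrable _ _)
    (hpart_cont.intervalIntegrable _ _)]
  have hbound : ∀ s ∈ Set.uIoc (0:ℝ) t,
      ‖NormedSpace.exp (s • A) - ∑ i ∈ Finset.range (κ + 1), ((i.factorial : ℝ)⁻¹) • (s • A) ^ i‖ ≤
      (‖A‖ * t) ^ (κ + 1) / (Nat.factorial (κ + 1)) * (1 / (1 - ‖A‖ * t / (κ + 2))) := by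
    intro s hs
    rw [Set.uIoc_of_le ht.le] at hs
    apply exp_taylor_tail_bound n κ (s • A) (‖A‖ * t) _ hε
    rw [norm_smul, Real.norm_eq_abs, abs_of_pos hs.1, mul_comm]
    gcongr
    exact hs.2
  have := intervalIntegral.norm_integral_le_of_norm_le_const hbound
  rw [sub_zero, abs_of_pos ht] at this
  linarith [this]
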